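/- Let p be an odd prime and let a, b be integers. Then 16^((p-1)/2) · Σ_{k=0}^{(p-1)/2} C(2k,k)² · 16^(-k) · (a-b)^((p-1)/2 - k) · (-b)^k ≡ 16^((p-1)/2) · Σ_{k=0}^{(p-1)/2} C((p-1)/2, k)² · a^((p-1)/2 - k) · b^k (mod p²), where both sides are interpreted as the integer congruence Σ_{k=0}^{(p-1)/2} C(2k,k)² · 16^((p-1)/2 - k) · (a-b)^((p-1)/2 - k) · (-b)^k ≡ 16^((p-1)/2) · Σ_{k=0}^{(p-1)/2} C((p-1)/2, k)² · a^((p-1)/2 - k) · b^k (mod p²). -/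

import Mathlib

open Finset
open Nat

private lemma choose_swap (m k j : ℕ) :
    m.choose k * (m - k).choose j = m.choose j * (m - j).choose k := by
  by_cases h : k + j ≤ m
  · have h1 := Nat.choose_mul (n := m) (k := k + j) (s := k) (Nat.le_add_right k j)
    have h2 := Nat.choose_mul (n := m) (k := k + j) (s := j) (Nat.le_add_left j k)
    have e1 : k + j - k = j := by omega
    have e2 : k + j - j = k := by omega
    rw [e1] at h1
    rw [e2] at h2
    have e3 : (k + j).choose k = (k + j).choose j := by
      have h4 := Nat.choose_symm (Nat.le_add_right k j)
      rw [e1] at h4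
      exact h4.symm
    calc m.choose k * (m - k).choose j = m.choose (k + j) * (k + j).choose k := h1.symm
      _ = m.choose (k + j) * (k + j).choose j := by rw [e3]
      _ = m.choose j * (m - j).choose k := h2
  · by_cases hk : k ≤ m
    · rw [Nat.choose_eq_zero_of_lt (show m - k < j by omega)]
      by_cases hjm : j ≤ m
      · rw [Nat.choose_eq_zero_of_lt (show m - j < k by omega)]; ring
      · rw [Nat.choose_eq_zero_of_lt (show m < j by omega)]; ring
    · rw [Nat.choose_eq_zero_of_lt (show m < k by omega),
        Nat.choose_eq_zero_of_lt (show m - j < k by omega)]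
      ring

private lemma vandermonde_special (m j : ℕ) (hj : j ≤ m) :
    ∑ k ∈ range (m + 1), (m - j).choose k * m.choose k = (2 * m - j).choose m := by
  have h : 2 * m - j = (m - j) + m := by omega
  rw [h, Nat.add_choose_eq, Finset.Nat.sum_antidiagonal_eq_sum_range_succ_mk]
  refine sum_congr rfl fun k hk => ?_
  have hk' : k ≤ m := by have := mem_range.mp hk; omega
  rw [Nat.choose_symm hk']

private lemma coeff_lemma (m j : ℕ) (hj : j ≤ m) :
    ∑ k ∈ range (m + 1), m.choose k * m.choose k * (m - k).choose j
      = m.choose j * (2 * m - j).choose m := by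
  have h1 : ∀ k, m.choose k * m.choose k * (m - k).choose j
      = m.choose j * ((m - j).choose k * m.choose k) := by
    intro k
    rw [mul_assoc, choose_swap m k j]
    ring
  rw [sum_congr rfl fun k _ => h1 k, ← mul_sum, vandermonde_special m j hj]

/-- The exact ring identity: `∑ C(m,k)C(m+k,k)(a-b)^(m-k)b^k = ∑ C(m,k)² a^(m-k) b^k`. -/
private lemma idB {R : Type*} [CommRing R] (m : ℕ) (a b : R) :
    ∑ k ∈ range (m + 1),
        (m.choose k : R) * ((m + k).choose k : R) * (a - b) ^ (m - k) * b ^ k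
      = ∑ k ∈ range (m + 1), (m.choose k : R) ^ 2 * a ^ (m - k) * b ^ k := by
  have key : ∀ k ∈ range (m + 1), (m.choose k : R) ^ 2 * a ^ (m - k) * b ^ k
      = ∑ j ∈ range (m + 1),
          (m.choose k : R) ^ 2 * ((m - k).choose j : R) * ((a - b) ^ j * b ^ (m - j)) := by
    intro k hk
    have hk' : k ≤ m := by have := mem_range.mp hk; omega
    have hpow : a ^ (m - k)
        = ∑ j ∈ range (m - k + 1), (a - b) ^ j * b ^ (m - k - j) * ((m - k).choose j : R) := by
      conv_lhs => rw [show a = (a - b) + b by ring]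
      rw [add_pow]
    rw [hpow, mul_sum, sum_mul]
    refine Eq.trans (sum_congr rfl fun j hj => ?_)
      (sum_subset (fun x hx => by simp only [mem_range] at *; omega)
        (fun j _ hj2 => by
          rw [Nat.choose_eq_zero_of_lt (show m - k < j by simp only [mem_range] at *; omega)]
          push_cast
          ring))
    have hj' : j ≤ m - k := by have := mem_range.mp hj; omega
    have hb : b ^ (m - k - j) * b ^ k = b ^ (m - j) := by
      rw [← pow_add]; congr 1; omega
    linear_combination ((m.choose k : R) ^ 2 * ((m - k).choose j : R) * (a - b) ^ j) * hb
  rw [sum_congr rfl key, sum_comm]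
  have inner : ∀ j ∈ range (m + 1),
      ∑ k ∈ range (m + 1),
          (m.choose k : R) ^ 2 * ((m - k).choose j : R) * ((a - b) ^ j * b ^ (m - j))
        = ((m.choose j : R) * ((2 * m - j).choose m : R)) * ((a - b) ^ j * b ^ (m - j)) := by
    intro j hj
    have hj' : j ≤ m := by have := mem_range.mp hj; omega
    rw [← sum_mul]
    congr 1
    have := coeff_lemma m j hj'
    have hcast : ((∑ k ∈ range (m + 1), m.choose k * m.choose k * (m - k).choose j : ℕ) : R)
        = ((m.choose j * (2 * m - j).choose m : ℕ) : R) := by rw [this]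
    push_cast at hcast
    rw [← hcast]
    exact sum_congr rfl fun k _ => by ring
  rw [sum_congr rfl inner, ← Finset.sum_range_reflect]
  refine sum_congr rfl fun k hk => ?_
  have hk' : k ≤ m := by have := mem_range.mp hk; omega
  have e1 : m + 1 - 1 - k = m - k := by omega
  have e2 : m - (m - k) = k := by omega
  have e4 : m.choose (m - k) = m.choose k := Nat.choose_symm hk'
  have e6 : (m + (m - k)).choose (m - k) = (2 * m - k).choose m := by
    rw [show m + (m - k) = 2 * m - k by omega, show m - k = 2 * m - k - m by omega,
      Nat.choose_symm (by omega)]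
  rw [e1, e2, e4, e6]
  ring

private lemma central_prod (k : ℕ) : k ! * (2 * k).choose k = ∏ j ∈ range k, (4 * j + 2) := by
  have two_fact : ∀ n : ℕ, (2 * n)! = n ! * ∏ j ∈ range n, (4 * j + 2) := by
    intro n
    induction n with
    | zero => simp
    | succ n ih =>
      rw [show 2 * (n + 1) = (2 * n + 1) + 1 by ring, Nat.factorial_succ, Nat.factorial_succ,
        ih, prod_range_succ, Nat.factorial_succ]
      ring
  have h := Nat.choose_mul_factorial_mul_factorial (show k ≤ 2 * k by omega)
  rw [show 2 * k - k = k by omega] at h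
  have hpos := Nat.factorial_pos k
  apply Nat.eq_of_mul_eq_mul_left hpos
  calc k ! * (k ! * (2 * k).choose k) = (2 * k).choose k * k ! * k ! := by ring
    _ = (2 * k)! := h
    _ = k ! * ∏ j ∈ range k, (4 * j + 2) := two_fact k

private lemma desc_prod1 (m k : ℕ) :
    k ! * m.choose k = ∏ i ∈ range k, (m - i) := by
  rw [← Nat.descFactorial_eq_factorial_mul_choose, Nat.descFactorial_eq_prod_range]

private lemma desc_prod2 (m k : ℕ) :
    k ! * (m + k).choose k = ∏ j ∈ range k, (m + 1 + j) := by
  rw [← Nat.descFactorial_eq_factorial_mul_choose, Nat.descFactorial_eq_prod_range]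
  rw [← Finset.prod_range_reflect]
  refine prod_congr rfl fun j hj => ?_
  have := mem_range.mp hj
  omega

private lemma keyA (p m k : ℕ) (hp : p.Prime) (hpm : p = 2 * m + 1) (hk : k ≤ m) :
    (((2 * k).choose k : ZMod (p ^ 2))) ^ 2
      = (-16) ^ k * (m.choose k : ZMod (p ^ 2)) * ((m + k).choose k : ZMod (p ^ 2)) := by
  haveI : NeZero (p ^ 2) := ⟨pow_ne_zero _ hp.pos.ne'⟩
  have hndvd : ¬ p ∣ k ! := by
    rw [Nat.Prime.dvd_factorial hp]
    omega
  have hcop : Nat.Coprime (k !) (p ^ 2) :=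
    (Nat.coprime_comm.mp ((Nat.Prime.coprime_iff_not_dvd hp).mpr hndvd)).pow_right 2
  have hu : IsUnit ((k ! : ZMod (p ^ 2))) := (ZMod.isUnit_iff_coprime _ _).mpr hcop
  have hu2 : IsUnit ((k ! : ZMod (p ^ 2)) ^ 2) := hu.pow 2
  refine hu2.mul_left_cancel ?_
  have hp0 : ((p : ZMod (p ^ 2))) ^ 2 = 0 := by
    have : ((p ^ 2 : ℕ) : ZMod (p ^ 2)) = 0 := ZMod.natCast_self _
    push_cast at this
    exact this
  have h0 : (2 * (m : ZMod (p ^ 2)) + 1) ^ 2 = 0 := by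
    have hpmR : ((p : ℕ) : ZMod (p ^ 2)) = 2 * (m : ZMod (p ^ 2)) + 1 := by
      rw [hpm]; push_cast; ring
    rw [← hpmR]
    exact hp0
  calc (k ! : ZMod (p ^ 2)) ^ 2 * ((2 * k).choose k : ZMod (p ^ 2)) ^ 2
      = (((k ! * (2 * k).choose k : ℕ) : ZMod (p ^ 2))) ^ 2 := by push_cast; ring
    _ = (((∏ j ∈ range k, (4 * j + 2) : ℕ) : ZMod (p ^ 2))) ^ 2 := by rw [central_prod]
    _ = (∏ j ∈ range k, ((4 * j + 2 : ℕ) : ZMod (p ^ 2))) ^ 2 := by push_cast; ring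
    _ = ∏ j ∈ range k, ((4 * j + 2 : ℕ) : ZMod (p ^ 2)) ^ 2 := by rw [prod_pow]
    _ = ∏ j ∈ range k, ((-16) * ((m - j : ℕ) : ZMod (p ^ 2)) * ((m + 1 + j : ℕ) : ZMod (p ^ 2))) := by
        refine prod_congr rfl fun j hj => ?_
        have hjk : j < k := mem_range.mp hj
        have hjm : j ≤ m := by omega
        have hsub : ((m - j : ℕ) : ZMod (p ^ 2)) = (m : ZMod (p ^ 2)) - (j : ZMod (p ^ 2)) := by
          exact_mod_cast Nat.cast_sub hjm
        rw [hsub]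
        push_cast
        linear_combination 4 * h0
    _ = ((-16 : ZMod (p ^ 2)) ^ k)
          * (∏ j ∈ range k, ((m - j : ℕ) : ZMod (p ^ 2)))
          * (∏ j ∈ range k, ((m + 1 + j : ℕ) : ZMod (p ^ 2))) := by
        rw [prod_mul_distrib, prod_mul_distrib, prod_const, card_range]
    _ = ((-16 : ZMod (p ^ 2)) ^ k)
          * (((k ! * m.choose k : ℕ) : ZMod (p ^ 2)))
          * (((k ! * (m + k).choose k : ℕ) : ZMod (p ^ 2))) := by
        rw [desc_prod1, desc_prod2]
        push_cast
        ring
    _ = (k ! : ZMod (p ^ 2)) ^ 2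
          * ((-16) ^ k * (m.choose k : ZMod (p ^ 2)) * ((m + k).choose k : ZMod (p ^ 2))) := by
        push_cast
        ring

theorem rv_theorem (p : ℕ) (hp : p.Prime) (hodd : Odd p) (a b : ℤ) :
    (∑ k ∈ range ((p - 1) / 2 + 1),
        ((Nat.choose (2 * k) k : ℤ)) ^ 2 * 16 ^ ((p - 1) / 2 - k) *
          (a - b) ^ ((p - 1) / 2 - k) * (-b) ^ k) ≡
      16 ^ ((p - 1) / 2) *
        ∑ k ∈ range ((p - 1) / 2 + 1),
          ((Nat.choose ((p - 1) / 2) k : ℤ)) ^ 2 * a ^ ((p - 1) / 2 - k) * b ^ k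
      [ZMOD (p : ℤ) ^ 2] := by
  obtain ⟨c, hc⟩ := hodd
  have hm : (p - 1) / 2 = c := by omega
  have hpm : p = 2 * c + 1 := by omega
  rw [hm]
  have hcast : ((p : ℤ)) ^ 2 = ((p ^ 2 : ℕ) : ℤ) := by push_cast; ring
  rw [hcast, ← ZMod.intCast_eq_intCast_iff]
  push_cast
  set R := ZMod (p ^ 2)
  set A : R := (a : R)
  set B : R := (b : R)
  rw [← idB c A B, mul_sum]
  refine sum_congr rfl fun k hk => ?_
  have hk' : k ≤ c := by have := mem_range.mp hk; omega
  rw [keyA p c k hp hpm hk']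
  have h16 : (16 : R) ^ (c - k) * 16 ^ k = 16 ^ c := by
    rw [← pow_add]
    congr 1
    omega
  have key2 : (-16 : R) ^ k * (-B) ^ k * 16 ^ (c - k) = 16 ^ c * B ^ k := by
    calc (-16 : R) ^ k * (-B) ^ k * 16 ^ (c - k) = ((-16) * -B) ^ k * 16 ^ (c - k) := by
          rw [mul_pow]
      _ = (16 * B) ^ k * 16 ^ (c - k) := by rw [neg_mul_neg]
      _ = (16 ^ (c - k) * 16 ^ k) * B ^ k := by rw [mul_pow]; ring
      _ = 16 ^ c * B ^ k := by rw [h16]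
  linear_combination ((c.choose k : R) * ((c + k).choose k : R) * (A - B) ^ (c - k)) * key2
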